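/- arXiv:2205.09329 — 4 statements merged into one kernel-verified Lean document; each statement's English description precedes it below -/
import Mathlib

section
/- Let N, n be positive integers, let ℓ₁, …, ℓₙ : ℝᴺ → ℝ and ℓ : ℝᴺ → ℝ be twice continuously differentiable, and let R(θ) = (1/n) Σᵢ₌₁ⁿ ℓᵢ(θ) be the empirical risk. Suppose θ : ℝ → ℝᴺ is differentiable at 0 and satisfies the stationarity condition ∇R(θ(δ)) + δ·∇ℓ(θ(δ)) = 0 for all δ in a neighborhood of 0. If the Hessian H = ∇²R(θ(0)) is invertible, then the influence of upweighting ℓ on the parameters is θ′(0) = −H⁻¹ ∇ℓ(θ(0)). -/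
/-- If `f` is `C²`, its gradient is differentiable at every point. -/
lemma differentiableAt_gradient_of_contDiff {N : ℕ}
    {f : EuclideanSpace ℝ (Fin N) → ℝ} (hf : ContDiff ℝ 2 f)
    (x : EuclideanSpace ℝ (Fin N)) :
    DifferentiableAt ℝ (gradient f) x := by
  have h1 : ContDiff ℝ 1 (fderiv ℝ f) := hf.fderiv_right (by norm_num)
  have : gradient f = fun y =>
      (InnerProductSpace.toDual ℝ (EuclideanSpace ℝ (Fin N))).symm (fderiv ℝ f y) := rfl
  rw [this]
  exact ((InnerProductSpace.toDual ℝ (EuclideanSpace ℝ (Fin N))).symm.toContinuousLinearEquiv.differentiableAt).comp x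
    (h1.differentiable (by norm_num)).differentiableAt

/-- **Influence of upweighting a loss on the parameters.**
If `θ δ` is a stationary point of the δ-reweighted objective `R + δ • ℓ` for all `δ`
near `0`, `θ` is differentiable at `0`, and the Hessian `H = ∇²R(θ 0)` (the Fréchet
derivative of the gradient of the empirical risk `R` at `θ 0`) is invertible, then
`θ′(0) = -H⁻¹ ∇ℓ(θ 0)`. -/
theorem influence_param_of_upweighting
    (N n : ℕ) (hN : 0 < N) (hn : 0 < n)
    (ℓi : Fin n → EuclideanSpace ℝ (Fin N) → ℝ)
    (ℓ : EuclideanSpace ℝ (Fin N) → ℝ)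
    (hℓi : ∀ i, ContDiff ℝ 2 (ℓi i)) (hℓ : ContDiff ℝ 2 ℓ)
    (R : EuclideanSpace ℝ (Fin N) → ℝ)
    (hR : R = fun θ => (1 / n : ℝ) * ∑ i, ℓi i θ)
    (θ : ℝ → EuclideanSpace ℝ (Fin N))
    (hθ : DifferentiableAt ℝ θ 0)
    (hstat : ∀ᶠ δ in nhds (0 : ℝ),
      gradient R (θ δ) + δ • gradient ℓ (θ δ) = 0)
    (H : EuclideanSpace ℝ (Fin N) ≃L[ℝ] EuclideanSpace ℝ (Fin N))
    (hH : (H : EuclideanSpace ℝ (Fin N) →L[ℝ] EuclideanSpace ℝ (Fin N)) =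
      fderiv ℝ (gradient R) (θ 0)) :
    deriv θ 0 = -(H.symm (gradient ℓ (θ 0))) := by
  have hRc : ContDiff ℝ 2 R := by
    rw [hR]
    exact ContDiff.mul contDiff_const (ContDiff.sum fun i _ => hℓi i)
  -- differentiability of gradients
  have hgR : DifferentiableAt ℝ (gradient R) (θ 0) :=
    differentiableAt_gradient_of_contDiff hRc (θ 0)
  have hgℓ : DifferentiableAt ℝ (fun δ => gradient ℓ (θ δ)) 0 :=
    (differentiableAt_gradient_of_contDiff hℓ (θ 0)).comp 0 hθ
  -- derivative of the stationarity function
  have h1 : HasDerivAt (fun δ => gradient R (θ δ))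
      ((H : EuclideanSpace ℝ (Fin N) →L[ℝ] EuclideanSpace ℝ (Fin N)) (deriv θ 0)) 0 := by
    rw [hH]
    exact hgR.hasFDerivAt.comp_hasDerivAt 0 hθ.hasDerivAt
  have h2 : HasDerivAt (fun δ => δ • gradient ℓ (θ δ))
      ((0 : ℝ) • deriv (fun δ => gradient ℓ (θ δ)) 0 + (1 : ℝ) • gradient ℓ (θ 0)) 0 := by
    exact (hasDerivAt_id (0 : ℝ)).smul hgℓ.hasDerivAt
  have h3 : HasDerivAt (fun δ => gradient R (θ δ) + δ • gradient ℓ (θ δ))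
      ((H : EuclideanSpace ℝ (Fin N) →L[ℝ] EuclideanSpace ℝ (Fin N)) (deriv θ 0)
        + gradient ℓ (θ 0)) 0 := by
    exact (h1.add h2).congr_deriv (by simp)
  have h4 : HasDerivAt (fun _ : ℝ => (0 : EuclideanSpace ℝ (Fin N)))
      ((H : EuclideanSpace ℝ (Fin N) →L[ℝ] EuclideanSpace ℝ (Fin N)) (deriv θ 0)
        + gradient ℓ (θ 0)) 0 := by
    exact h3.congr_of_eventuallyEq (by filter_upwards [hstat] with δ h using h.symm)
  have h5 := h4.deriv
  rw [deriv_const] at h5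
  have h6 : (H : EuclideanSpace ℝ (Fin N) →L[ℝ] EuclideanSpace ℝ (Fin N)) (deriv θ 0)
      = -gradient ℓ (θ 0) := by
    have := h5.symm
    linear_combination (norm := module) this
  have := congrArg H.symm h6
  simpa using this
end

section
/- Let N, n, m be positive integers, let ℓ₁, …, ℓₙ : ℝᴺ → ℝ and ℓ̂₁, …, ℓ̂ₘ : ℝᴺ → ℝ be twice continuously differentiable, and let R(θ) = (1/n) Σᵢ₌₁ⁿ ℓᵢ(θ). Suppose θ : ℝᵐ → ℝᴺ is differentiable at 0 and satisfies the stationarity condition ∇R(θ(δ)) + Σⱼ₌₁ᵐ δⱼ·∇ℓ̂ⱼ(θ(δ)) = 0 for all δ in a neighborhood of 0 in ℝᵐ. If H = ∇²R(θ(0)) is invertible, then the Fréchet derivative Dθ(0) : ℝᵐ → ℝᴺ satisfies Dθ(0)(eⱼ) = −H⁻¹ ∇ℓ̂ⱼ(θ(0)) for every standard basis vector eⱼ; consequently, along the removal direction v = (−1/n, …, −1/n) ∈ ℝᵐ one has Dθ(0)(v) = (1/n) Σⱼ₌₁ᵐ H⁻¹ ∇ℓ̂ⱼ(θ(0)). 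-/
/-- **Multi-dimensional parameter influence of a subset of losses.**
If `θ δ` is a stationary point of the δ-reweighted objective
`R + ∑ⱼ δⱼ • ℓhatⱼ` for all `δ` near `0` in `ℝᵐ`, `θ` is differentiable at `0`, and
the Hessian `H = ∇²R(θ 0)` is invertible, then the Fréchet derivative `Dθ(0)` maps
each standard basis vector `eⱼ` to `-H⁻¹ ∇ℓhatⱼ(θ 0)`, and maps the removal direction
`v = (-1/n, …, -1/n)` to `(1/n) ∑ⱼ H⁻¹ ∇ℓhatⱼ(θ 0)`. -/
theorem influence_param_of_subset
    (N n m : ℕ) (hN : 0 < N) (hn : 0 < n) (hm : 0 < m)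
    (ℓi : Fin n → EuclideanSpace ℝ (Fin N) → ℝ)
    (ℓhat : Fin m → EuclideanSpace ℝ (Fin N) → ℝ)
    (hℓi : ∀ i, ContDiff ℝ 2 (ℓi i)) (hℓhat : ∀ j, ContDiff ℝ 2 (ℓhat j))
    (R : EuclideanSpace ℝ (Fin N) → ℝ)
    (hR : R = fun θ => (1 / n : ℝ) * ∑ i, ℓi i θ)
    (θ : EuclideanSpace ℝ (Fin m) → EuclideanSpace ℝ (Fin N))
    (hθ : DifferentiableAt ℝ θ 0)
    (hstat : ∀ᶠ δ in nhds (0 : EuclideanSpace ℝ (Fin m)),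
      gradient R (θ δ) + ∑ j, δ j • gradient (ℓhat j) (θ δ) = 0)
    (H : EuclideanSpace ℝ (Fin N) ≃L[ℝ] EuclideanSpace ℝ (Fin N))
    (hH : (H : EuclideanSpace ℝ (Fin N) →L[ℝ] EuclideanSpace ℝ (Fin N)) =
      fderiv ℝ (gradient R) (θ 0)) :
    (∀ j : Fin m,
      fderiv ℝ θ 0 (EuclideanSpace.single j (1 : ℝ)) =
        -(H.symm (gradient (ℓhat j) (θ 0)))) ∧
    fderiv ℝ θ 0 ((WithLp.equiv 2 (Fin m → ℝ)).symm (fun _ => (-1 / n : ℝ))) =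
      (1 / n : ℝ) • ∑ j, H.symm (gradient (ℓhat j) (θ 0)) := by
  classical
  set A := fderiv ℝ θ 0 with hA
  set g : Fin m → EuclideanSpace ℝ (Fin N) := fun j => gradient (ℓhat j) (θ 0) with hg
  -- differentiability of gradient R at θ 0, from invertibility of H
  have hdR : DifferentiableAt ℝ (gradient R) (θ 0) := by
    by_contra h
    have h0 : fderiv ℝ (gradient R) (θ 0) = 0 := fderiv_zero_of_not_differentiableAt h
    rw [h0] at hH
    have hx : (EuclideanSpace.single (⟨0, hN⟩ : Fin N) (1 : ℝ)) = 0 := by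
      apply H.injective
      have := congrArg (fun T : EuclideanSpace ℝ (Fin N) →L[ℝ] EuclideanSpace ℝ (Fin N) =>
        T (EuclideanSpace.single (⟨0, hN⟩ : Fin N) (1 : ℝ))) hH
      simpa using this
    have := congrFun (congrArg (WithLp.equiv 2 (Fin N → ℝ)) hx) ⟨0, hN⟩
    simp [EuclideanSpace.single_apply] at this
  -- differentiability of gradients of ℓhat
  have hdg : ∀ j, DifferentiableAt ℝ (gradient (ℓhat j)) (θ 0) := by
    intro j
    have h1 : ContDiff ℝ 1 (fderiv ℝ (ℓhat j)) := (hℓhat j).fderiv_right le_rfl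
    have h2 : Differentiable ℝ (fderiv ℝ (ℓhat j)) := h1.differentiable one_ne_zero
    have heq : gradient (ℓhat j) = fun x =>
        (InnerProductSpace.toDual ℝ (EuclideanSpace ℝ (Fin N))).symm (fderiv ℝ (ℓhat j) x) := rfl
    rw [heq]
    exact ((InnerProductSpace.toDual ℝ (EuclideanSpace ℝ (Fin N))).symm.toContinuousLinearEquiv.differentiableAt).comp _ (h2 _)
  have hθ' : HasFDerivAt θ A 0 := hθ.hasFDerivAt
  have h1 : HasFDerivAt (fun δ => gradient R (θ δ))
      ((H : EuclideanSpace ℝ (Fin N) →L[ℝ] EuclideanSpace ℝ (Fin N)).comp A) 0 := by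
    have hd := hdR.hasFDerivAt
    rw [← hH] at hd
    exact hd.comp 0 hθ'
  have h2 : ∀ j : Fin m, HasFDerivAt (fun δ : EuclideanSpace ℝ (Fin m) =>
      δ j • gradient (ℓhat j) (θ δ))
      ((EuclideanSpace.proj j : EuclideanSpace ℝ (Fin m) →L[ℝ] ℝ).smulRight (g j)) 0 := by
    intro j
    have hc : HasFDerivAt (fun δ : EuclideanSpace ℝ (Fin m) => δ j)
        (EuclideanSpace.proj j : EuclideanSpace ℝ (Fin m) →L[ℝ] ℝ) 0 := by
      exact (EuclideanSpace.proj (𝕜 := ℝ) j).hasFDerivAt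
    have hf : HasFDerivAt (fun δ => gradient (ℓhat j) (θ δ))
        ((fderiv ℝ (gradient (ℓhat j)) (θ 0)).comp A) 0 :=
      ((hdg j).hasFDerivAt).comp 0 hθ'
    have := hc.fun_smul hf
    refine this.congr_fderiv ?_
    simp [hg]
  have hG : HasFDerivAt (fun δ : EuclideanSpace ℝ (Fin m) =>
      gradient R (θ δ) + ∑ j, δ j • gradient (ℓhat j) (θ δ))
      ((H : EuclideanSpace ℝ (Fin N) →L[ℝ] EuclideanSpace ℝ (Fin N)).comp A +
        ∑ j, (EuclideanSpace.proj j : EuclideanSpace ℝ (Fin m) →L[ℝ] ℝ).smulRight (g j)) 0 :=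
    h1.add (HasFDerivAt.fun_sum fun j _ => h2 j)
  have hfz : fderiv ℝ (fun δ : EuclideanSpace ℝ (Fin m) =>
      gradient R (θ δ) + ∑ j, δ j • gradient (ℓhat j) (θ δ)) 0 = 0 := by
    have heq : (fun δ : EuclideanSpace ℝ (Fin m) =>
        gradient R (θ δ) + ∑ j, δ j • gradient (ℓhat j) (θ δ))
        =ᶠ[nhds (0 : EuclideanSpace ℝ (Fin m))] fun _ => (0 : EuclideanSpace ℝ (Fin N)) := hstat
    rw [heq.fderiv_eq]
    exact fderiv_const_apply 0
  have hD0 : (H : EuclideanSpace ℝ (Fin N) →L[ℝ] EuclideanSpace ℝ (Fin N)).comp A +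
      ∑ j, (EuclideanSpace.proj j : EuclideanSpace ℝ (Fin m) →L[ℝ] ℝ).smulRight (g j) = 0 := by
    rw [← hG.fderiv]; exact hfz
  have key : ∀ v : EuclideanSpace ℝ (Fin m), A v = -(H.symm (∑ j, v j • g j)) := by
    intro v
    have hv := congrArg (fun T : EuclideanSpace ℝ (Fin m) →L[ℝ] EuclideanSpace ℝ (Fin N) =>
      T v) hD0
    simp only [ContinuousLinearMap.add_apply, ContinuousLinearMap.comp_apply,
      ContinuousLinearMap.sum_apply, ContinuousLinearMap.smulRight_apply,
      PiLp.proj_apply, ContinuousLinearMap.zero_apply,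
      ContinuousLinearEquiv.coe_coe] at hv
    have hHAv : H (A v) = -(∑ j, v j • g j) := eq_neg_of_add_eq_zero_left hv
    calc A v = H.symm (H (A v)) := (H.symm_apply_apply _).symm
      _ = H.symm (-(∑ j, v j • g j)) := by rw [hHAv]
      _ = -(H.symm (∑ j, v j • g j)) := map_neg _ _
  constructor
  · intro j
    rw [key]
    congr 1
    congr 1
    rw [Finset.sum_eq_single j]
    · simp [EuclideanSpace.single_apply, hg]
    · intro k _ hk
      simp [EuclideanSpace.single_apply, hk]
    · simp
  · rw [key]
    have hv : ∀ j : Fin m,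
        ((WithLp.equiv 2 (Fin m → ℝ)).symm (fun _ => (-1 / n : ℝ))) j = (-1 / n : ℝ) := by
      intro j; rfl
    simp only [hv]
    rw [← Finset.smul_sum, map_smul, map_sum]
    rw [neg_div, neg_smul, neg_neg, one_div]
end

section
/- Let N, n, m be positive integers, let ℓ₁, …, ℓₙ : ℝᴺ → ℝ and ℓ̂₁, …, ℓ̂ₘ : ℝᴺ → ℝ be twice continuously differentiable, and let R(θ) = (1/n) Σᵢ₌₁ⁿ ℓᵢ(θ). Suppose θ : ℝᵐ → ℝᴺ is differentiable at 0, satisfies ∇R(θ(δ)) + Σⱼ₌₁ᵐ δⱼ·∇ℓ̂ⱼ(θ(δ)) = 0 for all δ in a neighborhood of 0 in ℝᵐ, and H = ∇²R(θ(0)) is invertible. If L_test : ℝᴺ → ℝ is differentiable at θ̂ = θ(0), then the gradient at 0 of the map δ ↦ L_test(θ(δ)) has j-th component ⟨∇L_test(θ̂), −H⁻¹ ∇ℓ̂ⱼ(θ̂)⟩ for every j ∈ {1, …, m}. -/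
open RealInnerProductSpace

/-- **Multi-dimensional influence function of the test loss.**
If `θ δ` is a stationary point of the δ-reweighted objective `R + ∑ⱼ δⱼ • ℓhatⱼ` for
all `δ` near `0` in `ℝᵐ`, `θ` is differentiable at `0`, the Hessian `H = ∇²R(θ 0)` is
invertible, and the test loss `Ltest` is differentiable at `θhat = θ 0`, then the
`j`-th component of the gradient at `0` of `δ ↦ Ltest(θ δ)` equals
`⟪∇Ltest(θhat), -H⁻¹ ∇ℓhatⱼ(θhat)⟫` for every `j`. -/
theorem influence_loss_of_subset
    (N n m : ℕ) (hN : 0 < N) (hn : 0 < n) (hm : 0 < m)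
    (ℓi : Fin n → EuclideanSpace ℝ (Fin N) → ℝ)
    (ℓhat : Fin m → EuclideanSpace ℝ (Fin N) → ℝ)
    (hℓi : ∀ i, ContDiff ℝ 2 (ℓi i)) (hℓhat : ∀ j, ContDiff ℝ 2 (ℓhat j))
    (R : EuclideanSpace ℝ (Fin N) → ℝ)
    (hR : R = fun θ => (1 / n : ℝ) * ∑ i, ℓi i θ)
    (θ : EuclideanSpace ℝ (Fin m) → EuclideanSpace ℝ (Fin N))
    (hθ : DifferentiableAt ℝ θ 0)
    (hstat : ∀ᶠ δ in nhds (0 : EuclideanSpace ℝ (Fin m)),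
      gradient R (θ δ) + ∑ j, δ j • gradient (ℓhat j) (θ δ) = 0)
    (H : EuclideanSpace ℝ (Fin N) ≃L[ℝ] EuclideanSpace ℝ (Fin N))
    (hH : (H : EuclideanSpace ℝ (Fin N) →L[ℝ] EuclideanSpace ℝ (Fin N)) =
      fderiv ℝ (gradient R) (θ 0))
    (Ltest : EuclideanSpace ℝ (Fin N) → ℝ)
    (hLtest : DifferentiableAt ℝ Ltest (θ 0)) :
    ∀ j : Fin m,
      gradient (fun δ => Ltest (θ δ)) 0 j =
        ⟪gradient Ltest (θ 0), -(H.symm (gradient (ℓhat j) (θ 0)))⟫ := by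
  intro j
  have hRC : ContDiff ℝ 2 R := by
    rw [hR]; exact contDiff_const.mul (ContDiff.sum fun i _ => hℓi i)
  -- inner products with gradients compute fderivs
  have hinnerN : ∀ (f : EuclideanSpace ℝ (Fin N) → ℝ) (x v : EuclideanSpace ℝ (Fin N)),
      ⟪gradient f x, v⟫ = fderiv ℝ f x v := fun f x v => InnerProductSpace.toDual_symm_apply
  have hinnerM : ∀ (f : EuclideanSpace ℝ (Fin m) → ℝ) (x v : EuclideanSpace ℝ (Fin m)),
      ⟪gradient f x, v⟫ = fderiv ℝ f x v := fun f x v => InnerProductSpace.toDual_symm_apply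
  -- coordinate representation of the gradient
  have gradRepr : ∀ (f : EuclideanSpace ℝ (Fin N) → ℝ) (x : EuclideanSpace ℝ (Fin N)) (k : Fin N),
      gradient f x k = fderiv ℝ f x (EuclideanSpace.single k 1) := by
    intro f x k
    have h := hinnerN f x (EuclideanSpace.single k 1)
    rw [EuclideanSpace.inner_single_right] at h
    simpa using h
  -- the gradient of a C² function is differentiable
  have gradDiff : ∀ f : EuclideanSpace ℝ (Fin N) → ℝ, ContDiff ℝ 2 f →
      DifferentiableAt ℝ (gradient f) (θ 0) := by
    intro f hf
    have h1 : Differentiable ℝ (fderiv ℝ f) :=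
      (hf.fderiv_right (m := 1) (by norm_num)).differentiable one_ne_zero
    rw [differentiableAt_euclidean]
    intro k
    have h2 : (fun x => gradient f x k)
        = fun x => fderiv ℝ f x (EuclideanSpace.single k 1) := funext fun x => gradRepr f x k
    rw [h2]
    exact (h1 _).clm_apply (differentiableAt_const _)
  set Dθ := fderiv ℝ θ 0 with hDθ
  have hθ' : HasFDerivAt θ Dθ 0 := hθ.hasFDerivAt
  -- derivative of the stationarity equation
  have hA : HasFDerivAt (fun δ => gradient R (θ δ))
      ((H : EuclideanSpace ℝ (Fin N) →L[ℝ] EuclideanSpace ℝ (Fin N)).comp Dθ) 0 := by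
    have h1 : HasFDerivAt (gradient R)
        (H : EuclideanSpace ℝ (Fin N) →L[ℝ] EuclideanSpace ℝ (Fin N)) (θ 0) := by
      rw [hH]; exact (gradDiff R hRC).hasFDerivAt
    exact h1.comp 0 hθ'
  have hB : ∀ j' : Fin m,
      HasFDerivAt (fun δ : EuclideanSpace ℝ (Fin m) => δ j' • gradient (ℓhat j') (θ δ))
      ((EuclideanSpace.proj j' : EuclideanSpace ℝ (Fin m) →L[ℝ] ℝ).smulRight (gradient (ℓhat j') (θ 0))) 0 := by
    intro j'
    have hc : HasFDerivAt (fun δ : EuclideanSpace ℝ (Fin m) => δ j')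
        (EuclideanSpace.proj j' : EuclideanSpace ℝ (Fin m) →L[ℝ] ℝ) 0 := by
      have h0 := (EuclideanSpace.proj j' : EuclideanSpace ℝ (Fin m) →L[ℝ] ℝ).hasFDerivAt
        (x := (0 : EuclideanSpace ℝ (Fin m)))
      exact h0.congr_of_eventuallyEq (Filter.Eventually.of_forall fun δ => by simp)
    have hg : HasFDerivAt (fun δ => gradient (ℓhat j') (θ δ))
        ((fderiv ℝ (gradient (ℓhat j')) (θ 0)).comp Dθ) 0 :=
      ((gradDiff _ (hℓhat j')).hasFDerivAt).comp 0 hθ'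
    have h := hc.fun_smul hg
    simpa using h
  have hF : HasFDerivAt
      (fun δ : EuclideanSpace ℝ (Fin m) =>
        gradient R (θ δ) + ∑ j', δ j' • gradient (ℓhat j') (θ δ))
      ((H : EuclideanSpace ℝ (Fin N) →L[ℝ] EuclideanSpace ℝ (Fin N)).comp Dθ +
        ∑ j', (EuclideanSpace.proj j' : EuclideanSpace ℝ (Fin m) →L[ℝ] ℝ).smulRight (gradient (ℓhat j') (θ 0))) 0 :=
    hA.add (HasFDerivAt.fun_sum fun j' _ => hB j')
  have hzero : HasFDerivAt (fun _ : EuclideanSpace ℝ (Fin m) => (0 : EuclideanSpace ℝ (Fin N)))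
      ((H : EuclideanSpace ℝ (Fin N) →L[ℝ] EuclideanSpace ℝ (Fin N)).comp Dθ +
        ∑ j', (EuclideanSpace.proj j' : EuclideanSpace ℝ (Fin m) →L[ℝ] ℝ).smulRight (gradient (ℓhat j') (θ 0))) 0 :=
    hF.congr_of_eventuallyEq (hstat.mono fun δ h => h.symm)
  have hD0 : (H : EuclideanSpace ℝ (Fin N) →L[ℝ] EuclideanSpace ℝ (Fin N)).comp Dθ +
      ∑ j', (EuclideanSpace.proj j' : EuclideanSpace ℝ (Fin m) →L[ℝ] ℝ).smulRight (gradient (ℓhat j') (θ 0)) = 0 :=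
    hzero.unique (hasFDerivAt_const 0 0)
  -- apply to the j-th basis vector
  have hv : H (Dθ (EuclideanSpace.single j 1)) + gradient (ℓhat j) (θ 0) = 0 := by
    have h := congrArg (fun L : EuclideanSpace ℝ (Fin m) →L[ℝ] EuclideanSpace ℝ (Fin N) =>
      L (EuclideanSpace.single j 1)) hD0
    simp only [ContinuousLinearMap.add_apply, ContinuousLinearMap.coe_comp', Function.comp_apply,
      ContinuousLinearMap.sum_apply, ContinuousLinearMap.smulRight_apply,
      ContinuousLinearMap.zero_apply] at h
    have hsum : ∑ j' : Fin m, ((EuclideanSpace.proj j' : EuclideanSpace ℝ (Fin m) →L[ℝ] ℝ) (EuclideanSpace.single j (1 : ℝ)))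
        • gradient (ℓhat j') (θ 0) = gradient (ℓhat j) (θ 0) := by
      have hcoord : ∀ j' : Fin m, (EuclideanSpace.proj j' : EuclideanSpace ℝ (Fin m) →L[ℝ] ℝ) (EuclideanSpace.single j (1 : ℝ))
          = if j' = j then (1 : ℝ) else 0 := fun j' => EuclideanSpace.single_apply j (1 : ℝ) j'
      simp [hcoord, ite_smul]
    rw [hsum] at h
    exact h
  have hDθv : Dθ (EuclideanSpace.single j 1) = -(H.symm (gradient (ℓhat j) (θ 0))) := by
    have h1 : H (Dθ (EuclideanSpace.single j 1)) = -(gradient (ℓhat j) (θ 0)) :=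
      eq_neg_of_add_eq_zero_left hv
    have h2 := congrArg H.symm h1
    simpa using h2
  -- compute the gradient of the composite
  have hcompF : HasFDerivAt (fun δ => Ltest (θ δ)) ((fderiv ℝ Ltest (θ 0)).comp Dθ) 0 :=
    hLtest.hasFDerivAt.comp 0 hθ'
  have hcoord : gradient (fun δ => Ltest (θ δ)) 0 j
      = ⟪gradient (fun δ => Ltest (θ δ)) 0, EuclideanSpace.single j (1 : ℝ)⟫ := by
    rw [EuclideanSpace.inner_single_right]
    simp
  rw [hcoord, hinnerM, hcompF.fderiv]
  simp only [ContinuousLinearMap.coe_comp', Function.comp_apply]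
  rw [hDθv, ← hinnerN Ltest (θ 0)]
end

section
/- Let N, n, m be positive integers, let ℓ₁, …, ℓₙ : ℝᴺ → ℝ and ℓ̂₁, …, ℓ̂ₘ : ℝᴺ → ℝ be twice continuously differentiable, and let R(θ) = (1/n) Σᵢ₌₁ⁿ ℓᵢ(θ). Suppose θ : ℝᵐ → ℝᴺ is differentiable at 0, satisfies ∇R(θ(δ)) + Σⱼ₌₁ᵐ δⱼ·∇ℓ̂ⱼ(θ(δ)) = 0 for all δ in a neighborhood of 0 in ℝᵐ, and H = ∇²R(θ(0)) is invertible. Let 𝓛 : ℝᴺ → ℝ be differentiable at θ̂ = θ(0), and suppose ‖Σⱼ₌₁ᵐ H⁻¹ ∇ℓ̂ⱼ(θ̂)‖ ≤ ε for some ε ≥ 0. Then the directional derivative of 𝓛 ∘ θ at 0 along the removal direction v = (−1/n, …, −1/n) ∈ ℝᵐ satisfies |D(𝓛 ∘ θ)(0)(v)| ≤ (ε/n) · ‖∇𝓛(θ̂)‖. -/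
open InnerProductSpace

lemma grad_diff' {N : ℕ} {g : EuclideanSpace ℝ (Fin N) → ℝ} (hg : ContDiff ℝ 2 g) :
    Differentiable ℝ (gradient g) := by
  have h1 : ContDiff ℝ 1 (fderiv ℝ g) := hg.fderiv_right (by norm_num)
  have h : gradient g = fun x => (toDual ℝ (EuclideanSpace ℝ (Fin N))).symm (fderiv ℝ g x) := rfl
  rw [h]
  exact fun x => ((toDual ℝ (EuclideanSpace ℝ (Fin N))).symm.toContinuousLinearEquiv.differentiableAt).comp x (h1.differentiable one_ne_zero x)

set_option maxHeartbeats 1000000 in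
/-- **Bound on the directional derivative of the test loss along the removal direction.**
Under the stationarity condition for the δ-reweighted objective `R + ∑ⱼ δⱼ • ℓhatⱼ`,
with invertible Hessian `H = ∇²R(θ 0)`, if the accumulated parameter influence satisfies
`‖∑ⱼ H⁻¹ ∇ℓhatⱼ(θhat)‖ ≤ ε`, then the directional derivative of the test loss `𝓛 ∘ θ`
at `0` along the removal direction `v = (-1/n, …, -1/n)` is bounded in absolute value by
`(ε/n) · ‖∇𝓛(θhat)‖`. -/
theorem abs_directional_derivative_le_of_influence_bound
    (N n m : ℕ) (hN : 0 < N) (hn : 0 < n) (hm : 0 < m)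
    (ℓi : Fin n → EuclideanSpace ℝ (Fin N) → ℝ)
    (ℓhat : Fin m → EuclideanSpace ℝ (Fin N) → ℝ)
    (hℓi : ∀ i, ContDiff ℝ 2 (ℓi i)) (hℓhat : ∀ j, ContDiff ℝ 2 (ℓhat j))
    (R : EuclideanSpace ℝ (Fin N) → ℝ)
    (hR : R = fun θ => (1 / n : ℝ) * ∑ i, ℓi i θ)
    (θ : EuclideanSpace ℝ (Fin m) → EuclideanSpace ℝ (Fin N))
    (hθ : DifferentiableAt ℝ θ 0)
    (hstat : ∀ᶠ δ in nhds (0 : EuclideanSpace ℝ (Fin m)),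
      gradient R (θ δ) + ∑ j, δ j • gradient (ℓhat j) (θ δ) = 0)
    (H : EuclideanSpace ℝ (Fin N) ≃L[ℝ] EuclideanSpace ℝ (Fin N))
    (hH : (H : EuclideanSpace ℝ (Fin N) →L[ℝ] EuclideanSpace ℝ (Fin N)) =
      fderiv ℝ (gradient R) (θ 0))
    (𝓛 : EuclideanSpace ℝ (Fin N) → ℝ)
    (h𝓛 : DifferentiableAt ℝ 𝓛 (θ 0))
    (ε : ℝ) (hε : 0 ≤ ε)
    (hinf : ‖∑ j, H.symm (gradient (ℓhat j) (θ 0))‖ ≤ ε) :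
    |fderiv ℝ (fun δ => 𝓛 (θ δ)) 0
        ((WithLp.equiv 2 (Fin m → ℝ)).symm (fun _ => (-1 / n : ℝ)))| ≤
      (ε / n) * ‖gradient 𝓛 (θ 0)‖ := by
  have hnR : (n : ℝ) ≠ 0 := Nat.cast_ne_zero.mpr hn.ne'
  set v : EuclideanSpace ℝ (Fin m) :=
    (WithLp.equiv 2 (Fin m → ℝ)).symm (fun _ => (-1 / n : ℝ)) with hv
  have hvj : ∀ j : Fin m, v j = (-1 / n : ℝ) := fun j => rfl
  have hz : ∀ j : Fin m, (0 : EuclideanSpace ℝ (Fin m)) j = 0 := fun j => rfl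
  have hRC : ContDiff ℝ 2 R := by
    rw [hR]; exact contDiff_const.mul (ContDiff.sum fun i _ => hℓi i)
  have hgradR : Differentiable ℝ (gradient R) := grad_diff' hRC
  set Dθ : EuclideanSpace ℝ (Fin m) →L[ℝ] EuclideanSpace ℝ (Fin N) := fderiv ℝ θ 0 with hDθ
  set F : EuclideanSpace ℝ (Fin m) → EuclideanSpace ℝ (Fin N) :=
    fun δ => gradient R (θ δ) + ∑ j, δ j • gradient (ℓhat j) (θ δ) with hFdef
  set L : EuclideanSpace ℝ (Fin m) →L[ℝ] EuclideanSpace ℝ (Fin N) :=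
    ((H : EuclideanSpace ℝ (Fin N) →L[ℝ] EuclideanSpace ℝ (Fin N)).comp Dθ) + ∑ j : Fin m,
      ((0 : EuclideanSpace ℝ (Fin m)) j • (fderiv ℝ (fun δ => gradient (ℓhat j) (θ δ)) 0)
        + (EuclideanSpace.proj j).smulRight (gradient (ℓhat j) (θ 0))) with hL
  have hgθ : ∀ j : Fin m, DifferentiableAt ℝ (fun δ => gradient (ℓhat j) (θ δ)) 0 :=
    fun j => ((grad_diff' (hℓhat j)) (θ 0)).comp 0 hθ
  have hFderiv : HasFDerivAt F L 0 := by
    have h1 : HasFDerivAt (fun δ => gradient R (θ δ))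
        ((H : EuclideanSpace ℝ (Fin N) →L[ℝ] EuclideanSpace ℝ (Fin N)).comp Dθ) 0 := by
      rw [hH]
      exact (hgradR (θ 0)).hasFDerivAt.comp 0 hθ.hasFDerivAt
    have h2 : ∀ j : Fin m, HasFDerivAt (fun δ : EuclideanSpace ℝ (Fin m) =>
        δ j • gradient (ℓhat j) (θ δ))
        ((0 : EuclideanSpace ℝ (Fin m)) j • (fderiv ℝ (fun δ => gradient (ℓhat j) (θ δ)) 0)
          + (EuclideanSpace.proj j).smulRight (gradient (ℓhat j) (θ 0))) 0 := by
      intro j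
      have hc : HasFDerivAt (fun δ : EuclideanSpace ℝ (Fin m) => (δ j : ℝ))
          (EuclideanSpace.proj j : EuclideanSpace ℝ (Fin m) →L[ℝ] ℝ) 0 :=
        (EuclideanSpace.proj j : EuclideanSpace ℝ (Fin m) →L[ℝ] ℝ).hasFDerivAt
      exact hc.smul (hgθ j).hasFDerivAt
    exact h1.add (HasFDerivAt.fun_sum fun j _ => h2 j)
  have hF0 : fderiv ℝ F 0 = 0 := by
    have h : F =ᶠ[nhds (0 : EuclideanSpace ℝ (Fin m))]
        (fun _ => (0 : EuclideanSpace ℝ (Fin N))) := hstat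
    rw [h.fderiv_eq, fderiv_fun_const]
    rfl
  have hLv : L v = 0 := by rw [← hFderiv.fderiv, hF0]; rfl
  have hLv' : L v = H (Dθ v) + ∑ j, (-1 / n : ℝ) • gradient (ℓhat j) (θ 0) := by
    simp [hL, ContinuousLinearMap.sum_apply, hvj, hz]
  have hHDv : H (Dθ v) = (1 / n : ℝ) • ∑ j, gradient (ℓhat j) (θ 0) := by
    have h := hLv'.symm.trans hLv
    have h2 := eq_neg_of_add_eq_zero_left h
    rw [h2, ← Finset.smul_sum, ← neg_smul]
    congr 1
    rw [neg_div, neg_neg, one_div]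
  have hDv : Dθ v = (1 / n : ℝ) • ∑ j, H.symm (gradient (ℓhat j) (θ 0)) := by
    have h := congrArg H.symm hHDv
    simpa [map_smul, map_sum] using h
  have hDvnorm : ‖Dθ v‖ ≤ ε / n := by
    rw [hDv, norm_smul]
    rw [div_eq_mul_inv ε, mul_comm ε]
    have h : ‖(1 / n : ℝ)‖ = (n : ℝ)⁻¹ := by
      rw [Real.norm_eq_abs, abs_of_nonneg (by positivity), one_div]
    rw [h]
    exact mul_le_mul_of_nonneg_left hinf (by positivity)
  have hcomp : fderiv ℝ (fun δ => 𝓛 (θ δ)) 0 = (fderiv ℝ 𝓛 (θ 0)).comp Dθ :=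
    fderiv_comp 0 h𝓛 hθ
  have hinner : fderiv ℝ (fun δ => 𝓛 (θ δ)) 0 v = ⟪gradient 𝓛 (θ 0), Dθ v⟫_ℝ := by
    rw [hcomp]
    have h : fderiv ℝ 𝓛 (θ 0) =
        toDual ℝ (EuclideanSpace ℝ (Fin N)) (gradient 𝓛 (θ 0)) :=
      ((toDual ℝ (EuclideanSpace ℝ (Fin N))).apply_symm_apply (fderiv ℝ 𝓛 (θ 0))).symm
    rw [ContinuousLinearMap.comp_apply, h, toDual_apply_apply]
  calc |fderiv ℝ (fun δ => 𝓛 (θ δ)) 0 v| = |⟪gradient 𝓛 (θ 0), Dθ v⟫_ℝ| := by rw [hinner]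
    _ ≤ ‖gradient 𝓛 (θ 0)‖ * ‖Dθ v‖ := abs_real_inner_le_norm _ _
    _ ≤ ‖gradient 𝓛 (θ 0)‖ * (ε / n) := mul_le_mul_of_nonneg_left hDvnorm (norm_nonneg _)
    _ = (ε / n) * ‖gradient 𝓛 (θ 0)‖ := mul_comm _ _
end
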